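/- Let n = 2 or n = 3, let Z_1, Z_2 ∈ ℝ^n with Z_1 ≠ Z_2, and let d_1 ≥ d_2 ≥ 0. If d_1 − d_2 ≥ ‖Z_2 − Z_1‖, then the set of global minimizers of the squared-distance-error objective O(W) = |‖W − Z_1‖² − d_1²| + |‖W − Z_2‖² − d_2²| is exactly the single point N_1 = Z_1 + d_1 (Z_2 − Z_1)/‖Z_2 − Z_1‖. -/

import Mathlib

lemma key_lb (r d₁ d₂ a b : ℝ) (hr : 0 < r) (hd₂ : 0 ≤ d₂) (h : d₂ + r ≤ d₁)
    (ha : 0 ≤ a) (hb : 0 ≤ b) (htr : a ≤ b + r) :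
    (d₁ - r)^2 - d₂^2 ≤ |a^2 - d₁^2| + |b^2 - d₂^2| := by
  have h1 : b^2 - d₂^2 ≤ |b^2 - d₂^2| := le_abs_self _
  rcases le_or_gt a d₁ with hc | hc
  · have h2 : d₁^2 - a^2 ≤ |a^2 - d₁^2| := by rw [abs_sub_comm]; exact le_abs_self _
    rcases le_or_gt r a with hra | hra
    · nlinarith [mul_nonneg (by linarith : (0:ℝ) ≤ b - (a - r)) (by linarith : (0:ℝ) ≤ b + (a - r))]
    · nlinarith [sq_nonneg b]
  · have h2 : a^2 - d₁^2 ≤ |a^2 - d₁^2| := le_abs_self _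
    nlinarith [mul_nonneg (by linarith : (0:ℝ) ≤ b - (a - r)) (by linarith : (0:ℝ) ≤ b + (a - r))]

lemma key_eq (r d₁ d₂ a b : ℝ) (hr : 0 < r) (hd₂ : 0 ≤ d₂) (h : d₂ + r ≤ d₁)
    (ha : 0 ≤ a) (hb : 0 ≤ b) (htr : a ≤ b + r)
    (heq : |a^2 - d₁^2| + |b^2 - d₂^2| ≤ (d₁ - r)^2 - d₂^2) :
    a = d₁ ∧ b + r = a := by
  have h1 : b^2 - d₂^2 ≤ |b^2 - d₂^2| := le_abs_self _
  have h2 : d₁^2 - a^2 ≤ |a^2 - d₁^2| := by rw [abs_sub_comm]; exact le_abs_self _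
  have h3 : a^2 - d₁^2 ≤ |a^2 - d₁^2| := le_abs_self _
  have hle : a ≤ d₁ := by
    by_contra hc
    push_neg at hc
    nlinarith [mul_nonneg (by linarith : (0:ℝ) ≤ b - (a - r)) (by linarith : (0:ℝ) ≤ b + (a - r))]
  have hge : d₁ ≤ a := by
    by_contra hc
    push_neg at hc
    rcases le_or_gt r a with hra | hra
    · nlinarith [mul_nonneg (by linarith : (0:ℝ) ≤ b - (a - r)) (by linarith : (0:ℝ) ≤ b + (a - r))]
    · nlinarith [sq_nonneg b]
  have had : a = d₁ := le_antisymm hle hge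
  refine ⟨had, ?_⟩
  subst had
  -- now b^2 ≤ (a - r)^2 and b ≥ a - r ≥ 0
  have hb2 : b^2 ≤ (a - r)^2 := by nlinarith
  have : b ≤ a - r := by nlinarith
  linarith

/-- Two measurements, squared distance error, case (d): if `d₁ - d₂ ≥ ‖Z₂ - Z₁‖`, then
the set of global minimizers of `O(W) = |‖W - Z₁‖² - d₁²| + |‖W - Z₂‖² - d₂²|` is
exactly the single point `N₁ = Z₁ + d₁ (Z₂ - Z₁)/‖Z₂ - Z₁‖`. -/
theorem two_meas_squared_error_case_d
    (n : ℕ) (hn : n = 2 ∨ n = 3)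
    (Z₁ Z₂ : EuclideanSpace ℝ (Fin n)) (hZ : Z₁ ≠ Z₂)
    (d₁ d₂ : ℝ) (hd₂ : 0 ≤ d₂) (hd : d₂ ≤ d₁)
    (O : EuclideanSpace ℝ (Fin n) → ℝ)
    (hO : ∀ W, O W = |‖W - Z₁‖ ^ 2 - d₁ ^ 2| + |‖W - Z₂‖ ^ 2 - d₂ ^ 2|)
    (hcase : ‖Z₂ - Z₁‖ ≤ d₁ - d₂) :
    {W : EuclideanSpace ℝ (Fin n) | ∀ V, O W ≤ O V}
      = {Z₁ + (d₁ / ‖Z₂ - Z₁‖) • (Z₂ - Z₁)} := by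
  have hz : Z₂ - Z₁ ≠ 0 := sub_ne_zero.mpr (Ne.symm hZ)
  set r : ℝ := ‖Z₂ - Z₁‖ with hrdef
  have hr : 0 < r := norm_pos_iff.mpr hz
  have hd1r : d₂ + r ≤ d₁ := by linarith
  have hd₁ : 0 ≤ d₁ := le_trans hd₂ hd
  set N : EuclideanSpace ℝ (Fin n) := Z₁ + (d₁ / r) • (Z₂ - Z₁) with hNdef
  have hN1 : ‖N - Z₁‖ = d₁ := by
    have : N - Z₁ = (d₁ / r) • (Z₂ - Z₁) := by rw [hNdef]; abel
    rw [this, norm_smul, Real.norm_eq_abs, abs_of_nonneg (div_nonneg hd₁ hr.le)]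
    field_simp
    rw [← hrdef]
  have hN2' : N - Z₂ = (d₁ / r - 1) • (Z₂ - Z₁) := by
    rw [hNdef, sub_smul, one_smul]; abel
  have hN2 : ‖N - Z₂‖ = d₁ - r := by
    rw [hN2', norm_smul, Real.norm_eq_abs, abs_of_nonneg]
    · field_simp
      rw [← hrdef]; ring
    · rw [le_sub_iff_add_le, zero_add, le_div_iff₀ hr, one_mul]; linarith
  have hON : O N = (d₁ - r)^2 - d₂^2 := by
    rw [hO, hN1, hN2, sub_self, abs_zero, zero_add, abs_of_nonneg]
    nlinarith
  have htri : ∀ W : EuclideanSpace ℝ (Fin n), ‖W - Z₁‖ ≤ ‖W - Z₂‖ + r := by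
    intro W
    calc ‖W - Z₁‖ = ‖(W - Z₂) + (Z₂ - Z₁)‖ := by rw [sub_add_sub_cancel]
    _ ≤ ‖W - Z₂‖ + r := norm_add_le _ _
  have hlb : ∀ W, O N ≤ O W := by
    intro W
    rw [hO W, hON]
    exact key_lb r d₁ d₂ _ _ hr hd₂ hd1r (norm_nonneg _) (norm_nonneg _) (htri W)
  ext W
  simp only [Set.mem_setOf_eq, Set.mem_singleton_iff]
  constructor
  · intro hW
    have hWN : O W ≤ O N := hW N
    rw [hO W, hON] at hWN
    obtain ⟨ha, hab⟩ := key_eq r d₁ d₂ _ _ hr hd₂ hd1r (norm_nonneg _) (norm_nonneg _) (htri W) hWN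
    -- triangle equality → SameRay
    have hadd : ‖(W - Z₂) + (Z₂ - Z₁)‖ = ‖W - Z₂‖ + ‖Z₂ - Z₁‖ := by
      rw [sub_add_sub_cancel, ha]; linarith [hab]
    have hray : SameRay ℝ (W - Z₂) (Z₂ - Z₁) := sameRay_iff_norm_add.mpr hadd
    obtain ⟨t, ht0, htW⟩ := hray.exists_nonneg_right hz
    have hnorm : t * r = d₁ - r := by
      have := congrArg norm htW
      rw [norm_smul, Real.norm_eq_abs, abs_of_nonneg ht0] at this
      rw [← this]; linarith [hab]
    have ht : t = d₁ / r - 1 := by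
      field_simp
      linarith [hnorm]
    rw [ht] at htW
    have : W - Z₂ = N - Z₂ := by rw [htW, hN2']
    exact sub_left_inj.mp this
  · rintro rfl
    exact hlb
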